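/- Let Z be a network zero-sum game with unique QRE p for exploration rates T_k > 0, and G a game with d(Z,G) ≤ δ. If x(t) evolves under the Q-learning dynamics for G, then whenever N δ / T_min < D_KL(p‖x(t)) + D_KL(x(t)‖p) (with T_min = min_k T_k), the function t ↦ D_KL(p‖x(t)) is strictly decreasing at t. -/

import Mathlib

open Function

/-- A mixed strategy: a point of the probability simplex. -/
def IsSimplex {n : ℕ} (x : Fin n → ℝ) : Prop :=
  (∀ i, 0 ≤ x i) ∧ ∑ i, x i = 1

/-- The reward vector of player `k` in a network game. -/
def netReward {N : ℕ} {n : Fin N → ℕ} (E : Finset (Fin N × Fin N))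
    (A : ∀ k l : Fin N, Matrix (Fin (n k)) (Fin (n l)) ℝ)
    (x : ∀ l, Fin (n l) → ℝ) (k : Fin N) (i : Fin (n k)) : ℝ :=
  ∑ l ∈ Finset.univ.filter (fun l => (k, l) ∈ E), ∑ j, A k l i j * x l j

lemma netReward_mid {N : ℕ} {n : Fin N → ℕ} (E : Finset (Fin N × Fin N))
    (A : ∀ k l : Fin N, Matrix (Fin (n k)) (Fin (n l)) ℝ)
    (X p : ∀ l, Fin (n l) → ℝ) (k : Fin N) (i : Fin (n k)) :
    netReward E A (fun l j => (X l j + p l j) / 2) k i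
      = (netReward E A X k i + netReward E A p k i) / 2 := by
  simp only [netReward]
  rw [← Finset.sum_add_distrib, Finset.sum_div]
  refine Finset.sum_congr rfl fun l _ => ?_
  rw [← Finset.sum_add_distrib, Finset.sum_div]
  refine Finset.sum_congr rfl fun j _ => ?_
  ring

lemma alg1 {m : ℕ} (T : ℝ) (p X r : Fin m → ℝ)
    (hp : ∑ i, p i = 1) (hX : ∑ i, X i = 1) (hXpos : ∀ i, 0 < X i) :
    (∑ i, -(p i * (r i - (∑ j, X j * r j) + T * ∑ j, X j * Real.log (X j / X i))))
      = (∑ i, (X i - p i) * r i) - T * ∑ i, (X i - p i) * Real.log (X i) := by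
  have h1 : ∀ i : Fin m, ∑ j, X j * Real.log (X j / X i)
      = (∑ j, X j * Real.log (X j)) - Real.log (X i) := by
    intro i
    have : ∀ j : Fin m, X j * Real.log (X j / X i)
        = X j * Real.log (X j) - X j * Real.log (X i) := by
      intro j
      rw [Real.log_div (hXpos j).ne' (hXpos i).ne']; ring
    simp only [this, Finset.sum_sub_distrib, ← Finset.sum_mul, hX, one_mul]
  have h2 : ∀ i : Fin m, -(p i * (r i - (∑ j, X j * r j) +
      T * ((∑ j, X j * Real.log (X j)) - Real.log (X i))))
      = (X i - p i) * r i - T * ((X i - p i) * Real.log (X i))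
        - (X i * r i - p i * (∑ j, X j * r j))
        + T * (X i * Real.log (X i) - p i * (∑ j, X j * Real.log (X j))) := by
    intro i; ring
  simp only [h1, h2]
  simp only [Finset.sum_add_distrib, Finset.sum_sub_distrib, ← Finset.sum_mul,
    ← Finset.mul_sum, hp, hX, one_mul]
  ring


/-- Lemma: Q-learning on a game `G` at MPD distance at most `δ` from a network zero-sum game `Z`
with unique QRE `p` strictly decreases `D_KL(p‖x(t))` whenever
`Nδ/T_min < D_KL(p‖x(t)) + D_KL(x(t)‖p)`. -/
theorem KL_strictly_decreasing_near_nzsg {N : ℕ} (hN : 0 < N) {n : Fin N → ℕ}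
    -- the network zero-sum game `Z`:
    (E : Finset (Fin N × Fin N)) (hE : ∀ k, (k, k) ∉ E)
    (A : ∀ k l : Fin N, Matrix (Fin (n k)) (Fin (n l)) ℝ)
    (hzs : ∀ x : ∀ l, Fin (n l) → ℝ, (∀ l, IsSimplex (x l)) →
      ∑ k, ∑ i, x k i * netReward E A x k i = 0)
    -- the game `G`, given by reward functions depending only on opponents' strategies:
    (r : (∀ l, Fin (n l) → ℝ) → ∀ k, Fin (n k) → ℝ)
    (hr : ∀ (k : Fin N) (x : ∀ l, Fin (n l) → ℝ) (y : Fin (n k) → ℝ),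
      r (update x k y) k = r x k)
    -- `d(Z, G) ≤ δ`:
    (δ : ℝ) (hδ : 0 < δ)
    (hd : ∀ (k : Fin N) (x : ∀ l, Fin (n l) → ℝ) (y : Fin (n k) → ℝ),
      (∀ l, IsSimplex (x l)) → IsSimplex y →
      |(∑ i, y i * netReward E A x k i) - (∑ i, x k i * netReward E A x k i) -
        ((∑ i, y i * r x k i) - (∑ i, x k i * r x k i))| ≤ δ)
    -- exploration rates:
    (T : Fin N → ℝ) (hT : ∀ k, 0 < T k)
    -- `p` is the unique QRE of `Z`:
    (p : ∀ l, Fin (n l) → ℝ) (hpPos : ∀ k i, 0 < p k i) (hp : ∀ l, IsSimplex (p l))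
    (hQRE : ∀ (k : Fin N) (i : Fin (n k)),
      p k i = Real.exp (netReward E A p k i / T k) /
        ∑ j, Real.exp (netReward E A p k j / T k))
    (hUnique : ∀ q : ∀ l, Fin (n l) → ℝ, (∀ l, IsSimplex (q l)) →
      (∀ (k : Fin N) (i : Fin (n k)),
        q k i = Real.exp (netReward E A q k i / T k) /
          ∑ j, Real.exp (netReward E A q k j / T k)) → q = p)
    -- a trajectory of the Q-learning dynamics on `G`:
    (x : ℝ → ∀ l, Fin (n l) → ℝ)
    (hxPos : ∀ s k i, 0 < x s k i) (hxS : ∀ s l, IsSimplex (x s l))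
    (hdyn : ∀ (s : ℝ) (k : Fin N) (i : Fin (n k)),
      HasDerivAt (fun τ => x τ k i)
        (x s k i * (r (x s) k i - (∑ j, x s k j * r (x s) k j) +
          T k * ∑ j, x s k j * Real.log (x s k j / x s k i))) s)
    -- at time `t`, the trajectory is outside the trapping region:
    (t : ℝ)
    (ht : (N : ℝ) * δ / (⨅ k, T k) <
      (∑ k, ∑ i, p k i * Real.log (p k i / x t k i)) +
        ∑ k, ∑ i, x t k i * Real.log (x t k i / p k i)) :
    -- then `D_KL(p‖x(·))` is strictly decreasing at `t`:
    ∃ d : ℝ, d < 0 ∧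
      HasDerivAt (fun s => ∑ k, ∑ i, p k i * Real.log (p k i / x s k i)) d t := by
  classical
  have hpS : ∀ k, ∑ i, p k i = 1 := fun k => (hp k).2
  have hXS : ∀ k, ∑ i, x t k i = 1 := fun k => (hxS t k).2
  have hNe : Nonempty (Fin N) := ⟨⟨0, hN⟩⟩
  set Tm := ⨅ k, T k with hTmdef
  have hTmle : ∀ k, Tm ≤ T k := fun k => ciInf_le (Finite.bddBelow_range T) k
  have hTmpos : 0 < Tm := by
    obtain ⟨k0, hk0⟩ := Finite.exists_min T
    have h : Tm = T k0 :=
      le_antisymm (ciInf_le (Finite.bddBelow_range T) k0) (le_ciInf hk0)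
    rw [h]; exact hT k0
  refine ⟨∑ k, ∑ i, -(p k i * (r (x t) k i - (∑ j, x t k j * r (x t) k j) +
      T k * ∑ j, x t k j * Real.log (x t k j / x t k i))), ?_, ?_⟩
  · -- the inequality
    -- rewrite using alg1
    have key : ∀ k : Fin N, (∑ i, -(p k i * (r (x t) k i - (∑ j, x t k j * r (x t) k j) +
        T k * ∑ j, x t k j * Real.log (x t k j / x t k i))))
        = (∑ i, (x t k i - p k i) * r (x t) k i)
          - T k * ∑ i, (x t k i - p k i) * Real.log (x t k i) :=
      fun k => alg1 (T k) (p k) (x t k) (fun i => r (x t) k i) (hpS k) (hXS k)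
        (fun i => hxPos t k i)
    rw [Finset.sum_congr rfl fun k _ => key k]
    -- Step B: MPD bound
    have hB : ∀ k : Fin N, (∑ i, (x t k i - p k i) * r (x t) k i)
        ≤ δ + ∑ i, (x t k i - p k i) * netReward E A (x t) k i := by
      intro k
      have habs := abs_le.mp (hd k (x t) (p k) (hxS t) (hp k))
      have e1 : ∑ i, (x t k i - p k i) * r (x t) k i
          = (∑ i, x t k i * r (x t) k i) - ∑ i, p k i * r (x t) k i := by
        simp [sub_mul, Finset.sum_sub_distrib]
      have e2 : ∑ i, (x t k i - p k i) * netReward E A (x t) k i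
          = (∑ i, x t k i * netReward E A (x t) k i)
            - ∑ i, p k i * netReward E A (x t) k i := by
        simp [sub_mul, Finset.sum_sub_distrib]
      rw [e1, e2]; linarith [habs.1]
    -- Step C: cross identity from zero-sum structure
    have hX0 := hzs (x t) (hxS t)
    have hp0 := hzs p hp
    have hmS : ∀ l, IsSimplex (fun j => (x t l j + p l j) / 2) := by
      intro l
      constructor
      · intro j
        have := (hxS t l).1 j
        have := (hp l).1 j
        positivity
      · rw [← Finset.sum_div, Finset.sum_add_distrib, hpS l, hXS l]
        norm_num
    have hcross : (∑ k, ∑ i, x t k i * netReward E A p k i)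
        + (∑ k, ∑ i, p k i * netReward E A (x t) k i) = 0 := by
      have h0 := hzs (fun l j => (x t l j + p l j) / 2) hmS
      have e : ∀ (k : Fin N) (i : Fin (n k)),
          (x t k i + p k i) / 2 * netReward E A (fun l j => (x t l j + p l j) / 2) k i
          = (x t k i * netReward E A (x t) k i) / 4
            + (x t k i * netReward E A p k i) / 4
            + (p k i * netReward E A (x t) k i) / 4
            + (p k i * netReward E A p k i) / 4 := by
        intro k i; rw [netReward_mid]; ring
      rw [Finset.sum_congr rfl fun k _ => Finset.sum_congr rfl fun i _ => e k i] at h0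
      simp only [Finset.sum_add_distrib, ← Finset.sum_div] at h0
      linarith
    have hzXzp : ∑ k, ∑ i, (x t k i - p k i) * netReward E A (x t) k i
        = ∑ k, ∑ i, (x t k i - p k i) * netReward E A p k i := by
      have e1 : ∀ (q z : ∀ l, Fin (n l) → ℝ → ℝ), True := fun _ _ => trivial
      have s1 : ∑ k, ∑ i, (x t k i - p k i) * netReward E A (x t) k i
          = (∑ k, ∑ i, x t k i * netReward E A (x t) k i)
            - ∑ k, ∑ i, p k i * netReward E A (x t) k i := by
        simp [sub_mul, Finset.sum_sub_distrib]
      have s2 : ∑ k, ∑ i, (x t k i - p k i) * netReward E A p k i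
          = (∑ k, ∑ i, x t k i * netReward E A p k i)
            - ∑ k, ∑ i, p k i * netReward E A p k i := by
        simp [sub_mul, Finset.sum_sub_distrib]
      rw [s1, s2]; linarith
    -- Step D/E: QRE gives z(p) in terms of log p
    have hzp : ∀ k : Fin N, ∑ i, (x t k i - p k i) * netReward E A p k i
        = T k * ∑ i, (x t k i - p k i) * Real.log (p k i) := by
      intro k
      by_cases hnk : Nonempty (Fin (n k))
      · obtain ⟨i0⟩ := hnk
        set S := ∑ j, Real.exp (netReward E A p k j / T k) with hSdef
        have hSpos : 0 < S :=
          Finset.sum_pos (fun j _ => Real.exp_pos _) ⟨i0, Finset.mem_univ i0⟩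
        have hzi : ∀ i, netReward E A p k i
            = T k * Real.log (p k i) + T k * Real.log S := by
          intro i
          have hq := hQRE k i
          have hlog : Real.log (p k i) = netReward E A p k i / T k - Real.log S := by
            rw [hq, Real.log_div (Real.exp_ne_zero _) hSpos.ne', Real.log_exp]
          rw [hlog, mul_sub, mul_comm (T k) (netReward E A p k i / T k),
            div_mul_cancel₀ _ (hT k).ne']
          ring
        calc ∑ i, (x t k i - p k i) * netReward E A p k i
            = ∑ i, (T k * ((x t k i - p k i) * Real.log (p k i))
                + T k * Real.log S * (x t k i - p k i)) := by
              refine Finset.sum_congr rfl fun i _ => ?_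
              rw [hzi i]; ring
          _ = T k * (∑ i, (x t k i - p k i) * Real.log (p k i))
                + T k * Real.log S * ∑ i, (x t k i - p k i) := by
              rw [Finset.sum_add_distrib, ← Finset.mul_sum, ← Finset.mul_sum]
          _ = T k * ∑ i, (x t k i - p k i) * Real.log (p k i) := by
              rw [Finset.sum_sub_distrib, hpS k, hXS k]
              ring
      · haveI := not_nonempty_iff.mp hnk
        simp
    -- define D_k
    have hDk_nonneg : ∀ k : Fin N,
        0 ≤ ∑ i, (x t k i - p k i) * (Real.log (x t k i) - Real.log (p k i)) := by
      intro k
      refine Finset.sum_nonneg fun i _ => ?_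
      rcases le_total (x t k i) (p k i) with h | h
      · have h1 : x t k i - p k i ≤ 0 := by linarith
        have h2 : Real.log (x t k i) - Real.log (p k i) ≤ 0 := by
          have := Real.log_le_log (hxPos t k i) h
          linarith
        nlinarith [mul_nonneg (neg_nonneg.mpr h1) (neg_nonneg.mpr h2)]
      · have h1 : 0 ≤ x t k i - p k i := by linarith
        have h2 : 0 ≤ Real.log (x t k i) - Real.log (p k i) := by
          have := Real.log_le_log (hpPos k i) h
          linarith
        exact mul_nonneg h1 h2
    have hDk_eq : ∀ k : Fin N,
        (∑ i, (x t k i - p k i) * (Real.log (x t k i) - Real.log (p k i)))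
        = (∑ i, p k i * Real.log (p k i / x t k i))
          + ∑ i, x t k i * Real.log (x t k i / p k i) := by
      intro k
      rw [← Finset.sum_add_distrib]
      refine Finset.sum_congr rfl fun i _ => ?_
      rw [Real.log_div (hpPos k i).ne' (hxPos t k i).ne',
        Real.log_div (hxPos t k i).ne' (hpPos k i).ne']
      ring
    -- combine
    have step1 : ∑ k, ((∑ i, (x t k i - p k i) * r (x t) k i)
          - T k * ∑ i, (x t k i - p k i) * Real.log (x t k i))
        ≤ ∑ k, (δ + (∑ i, (x t k i - p k i) * netReward E A (x t) k i)
          - T k * ∑ i, (x t k i - p k i) * Real.log (x t k i)) := by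
      refine Finset.sum_le_sum fun k _ => ?_
      have := hB k; linarith
    have step2 : ∑ k, (δ + (∑ i, (x t k i - p k i) * netReward E A (x t) k i)
          - T k * ∑ i, (x t k i - p k i) * Real.log (x t k i))
        = (N : ℝ) * δ + (∑ k, ∑ i, (x t k i - p k i) * netReward E A (x t) k i)
          - ∑ k, T k * ∑ i, (x t k i - p k i) * Real.log (x t k i) := by
      rw [Finset.sum_sub_distrib, Finset.sum_add_distrib, Finset.sum_const,
        Finset.card_univ, Fintype.card_fin, nsmul_eq_mul]
    have step3 : (∑ k, ∑ i, (x t k i - p k i) * netReward E A (x t) k i)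
          - ∑ k, T k * ∑ i, (x t k i - p k i) * Real.log (x t k i)
        = - ∑ k, T k * ∑ i, (x t k i - p k i)
            * (Real.log (x t k i) - Real.log (p k i)) := by
      rw [hzXzp, Finset.sum_congr rfl fun k _ => hzp k, ← Finset.sum_sub_distrib,
        ← Finset.sum_neg_distrib]
      refine Finset.sum_congr rfl fun k _ => ?_
      have e : ∑ i, (x t k i - p k i) * (Real.log (x t k i) - Real.log (p k i))
          = (∑ i, (x t k i - p k i) * Real.log (x t k i))
            - ∑ i, (x t k i - p k i) * Real.log (p k i) := by
        simp [mul_sub, Finset.sum_sub_distrib]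
      rw [e]; ring
    have step4 : (N : ℝ) * δ < ∑ k, T k * ∑ i, (x t k i - p k i)
        * (Real.log (x t k i) - Real.log (p k i)) := by
      have h1 : Tm * (∑ k, ∑ i, (x t k i - p k i)
          * (Real.log (x t k i) - Real.log (p k i)))
          ≤ ∑ k, T k * ∑ i, (x t k i - p k i)
            * (Real.log (x t k i) - Real.log (p k i)) := by
        rw [Finset.mul_sum]
        exact Finset.sum_le_sum fun k _ =>
          mul_le_mul_of_nonneg_right (hTmle k) (hDk_nonneg k)
      have h2 : ∑ k, ∑ i, (x t k i - p k i) * (Real.log (x t k i) - Real.log (p k i))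
          = (∑ k, ∑ i, p k i * Real.log (p k i / x t k i))
            + ∑ k, ∑ i, x t k i * Real.log (x t k i / p k i) := by
        rw [← Finset.sum_add_distrib]
        exact Finset.sum_congr rfl fun k _ => hDk_eq k
      have h3 : (N : ℝ) * δ < Tm * (∑ k, ∑ i, (x t k i - p k i)
          * (Real.log (x t k i) - Real.log (p k i))) := by
        rw [h2]
        calc (N : ℝ) * δ = Tm * ((N : ℝ) * δ / Tm) := by
              field_simp
          _ < _ := by
              exact mul_lt_mul_of_pos_left ht hTmpos
      linarith
    calc ∑ k, ((∑ i, (x t k i - p k i) * r (x t) k i)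
          - T k * ∑ i, (x t k i - p k i) * Real.log (x t k i))
        ≤ (N : ℝ) * δ + ((∑ k, ∑ i, (x t k i - p k i) * netReward E A (x t) k i)
          - ∑ k, T k * ∑ i, (x t k i - p k i) * Real.log (x t k i)) := by
          rw [← add_sub_assoc, ← step2]; exact step1
      _ = (N : ℝ) * δ - ∑ k, T k * ∑ i, (x t k i - p k i)
            * (Real.log (x t k i) - Real.log (p k i)) := by
          rw [step3]; ring
      _ < 0 := by linarith
  · -- the derivative
    refine HasDerivAt.fun_sum fun k _ => HasDerivAt.fun_sum fun i _ => ?_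
    have hfun : (fun s => p k i * Real.log (p k i / x s k i))
        = fun s => p k i * (Real.log (p k i) - Real.log (x s k i)) := by
      funext s
      rw [Real.log_div (hpPos k i).ne' (hxPos s k i).ne']
    rw [hfun]
    have h1 := ((hdyn t k i).log (hxPos t k i).ne').const_sub (Real.log (p k i))
    have h2 := h1.const_mul (p k i)
    convert h2 using 1
    · rfl
    have hx := (hxPos t k i).ne'
    field_simp
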